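/- Let P be a p×p permutation matrix, L a p×p real unit lower-triangular matrix, Q a p×p real orthogonal matrix, and Λ = diag(λ_1, …, λ_p) a real diagonal matrix, and set H̄ = Pᵀ L Q Λ Qᵀ Lᵀ P. Let λ̄ > 0 and assume the spectral norm of H̄ satisfies ‖H̄‖₂ ≤ λ̄ (equivalently, every eigenvalue λ of H̄ satisfies |λ| ≤ λ̄). Let τ > 0, let Λ̄ be the clipped diagonal matrix with entries max{τ, |λ_j|}, and set H̄̄ = Pᵀ L Q Λ̄ Qᵀ Lᵀ P. Then λ_max(H̄̄) ≤ σ_max(L)² · max{ τ, λ̄/σ_min(L)² }, where σ_min(L) and σ_max(L) are the smallest and largest singular values of L. -/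
import Mathlib


open Matrix

/-- The Euclidean norm on `ℝ^p` (vectors identified with `Fin p → ℝ`). -/
noncomputable def euclNorm {p : ℕ} (x : Fin p → ℝ) : ℝ := Real.sqrt (∑ i, x i ^ 2)

/-- The largest eigenvalue of a symmetric real matrix, characterized as the supremum
of the Rayleigh quotient `xᵀ A x / (xᵀ x)` over nonzero `x`. -/
noncomputable def lambdaMax {p : ℕ} (A : Matrix (Fin p) (Fin p) ℝ) : ℝ :=
  ⨆ x : {x : Fin p → ℝ // x ≠ 0}, x.1 ⬝ᵥ A.mulVec x.1 / euclNorm x.1 ^ 2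

/-- The smallest singular value of a real matrix `L`, characterized as the infimum of
`‖L x‖ / ‖x‖` over nonzero `x`. -/
noncomputable def sigmaMin {p : ℕ} (L : Matrix (Fin p) (Fin p) ℝ) : ℝ :=
  ⨅ x : {x : Fin p → ℝ // x ≠ 0}, euclNorm (L.mulVec x.1) / euclNorm x.1

/-- The largest singular value of a real matrix `L`, characterized as the supremum of
`‖L x‖ / ‖x‖` over nonzero `x`. -/
noncomputable def sigmaMax {p : ℕ} (L : Matrix (Fin p) (Fin p) ℝ) : ℝ :=
  ⨆ x : {x : Fin p → ℝ // x ≠ 0}, euclNorm (L.mulVec x.1) / euclNorm x.1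

/- ### Auxiliary lemmas -/

private lemma euclNorm_sq {p : ℕ} (x : Fin p → ℝ) : euclNorm x ^ 2 = ∑ i, x i ^ 2 :=
  Real.sq_sqrt (Finset.sum_nonneg fun _ _ => sq_nonneg _)

private lemma euclNorm_nonneg {p : ℕ} (x : Fin p → ℝ) : 0 ≤ euclNorm x := Real.sqrt_nonneg _

private lemma euclNorm_zero {p : ℕ} : euclNorm (0 : Fin p → ℝ) = 0 := by
  simp [euclNorm]

private lemma euclNorm_pos {p : ℕ} {x : Fin p → ℝ} (hx : x ≠ 0) : 0 < euclNorm x := by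
  obtain ⟨i, hi⟩ := Function.ne_iff.mp hx
  exact Real.sqrt_pos.mpr (Finset.sum_pos' (fun _ _ => sq_nonneg _)
    ⟨i, Finset.mem_univ i, lt_of_le_of_ne (sq_nonneg _) (Ne.symm (pow_ne_zero 2 hi))⟩)

private lemma dot_self_eq {p : ℕ} (x : Fin p → ℝ) : x ⬝ᵥ x = euclNorm x ^ 2 := by
  rw [euclNorm_sq]
  simp [dotProduct, sq]

private lemma dot_le_norm {p : ℕ} (x y : Fin p → ℝ) : x ⬝ᵥ y ≤ euclNorm x * euclNorm y := by
  simpa [euclNorm, dotProduct] using Real.sum_mul_le_sqrt_mul_sqrt Finset.univ x y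

private lemma mulVec_euclNorm_le {p : ℕ} (M : Matrix (Fin p) (Fin p) ℝ) (x : Fin p → ℝ) :
    euclNorm (M.mulVec x) ≤ Real.sqrt (∑ i, ∑ j, M i j ^ 2) * euclNorm x := by
  rw [euclNorm, euclNorm, ← Real.sqrt_mul (by positivity)]
  apply Real.sqrt_le_sqrt
  rw [Finset.sum_mul]
  apply Finset.sum_le_sum
  intro i _
  have : M.mulVec x i = ∑ j, M i j * x j := rfl
  rw [this]
  exact Finset.sum_mul_sq_le_sq_mul_sq Finset.univ (fun j => M i j) x

private lemma sigmaMax_bdd {p : ℕ} (M : Matrix (Fin p) (Fin p) ℝ) :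
    BddAbove (Set.range fun x : {x : Fin p → ℝ // x ≠ 0} =>
      euclNorm (M.mulVec x.1) / euclNorm x.1) := by
  refine ⟨Real.sqrt (∑ i, ∑ j, M i j ^ 2), ?_⟩
  rintro r ⟨x, rfl⟩
  rw [div_le_iff₀ (euclNorm_pos x.2)]
  exact mulVec_euclNorm_le M x.1

private lemma le_sigmaMax {p : ℕ} (M : Matrix (Fin p) (Fin p) ℝ) (x : Fin p → ℝ) :
    euclNorm (M.mulVec x) ≤ sigmaMax M * euclNorm x := by
  by_cases hx : x = 0
  · subst hx
    simp [Matrix.mulVec_zero, euclNorm_zero]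
  · have h := le_ciSup (sigmaMax_bdd M) (⟨x, hx⟩ : {x : Fin p → ℝ // x ≠ 0})
    rw [show sigmaMax M = ⨆ x : {x : Fin p → ℝ // x ≠ 0},
      euclNorm (M.mulVec x.1) / euclNorm x.1 from rfl] at *
    exact (div_le_iff₀ (euclNorm_pos hx)).mp h

private lemma sigmaMax_nonneg {p : ℕ} [Nonempty {x : Fin p → ℝ // x ≠ 0}]
    (M : Matrix (Fin p) (Fin p) ℝ) : 0 ≤ sigmaMax M := by
  obtain ⟨x⟩ := (inferInstance : Nonempty {x : Fin p → ℝ // x ≠ 0})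
  exact le_trans (div_nonneg (euclNorm_nonneg _) (euclNorm_nonneg _))
    (le_ciSup (sigmaMax_bdd M) x)

private lemma transpose_mulVec_le {p : ℕ} [Nonempty {x : Fin p → ℝ // x ≠ 0}]
    (M : Matrix (Fin p) (Fin p) ℝ) (x : Fin p → ℝ) :
    euclNorm (Mᵀ.mulVec x) ≤ sigmaMax M * euclNorm x := by
  by_cases h : Mᵀ.mulVec x = 0
  · rw [h, euclNorm_zero]
    exact mul_nonneg (sigmaMax_nonneg M) (euclNorm_nonneg x)
  · have key : euclNorm (Mᵀ.mulVec x) ^ 2 ≤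
        euclNorm x * (sigmaMax M * euclNorm (Mᵀ.mulVec x)) := by
      calc euclNorm (Mᵀ.mulVec x) ^ 2 = (Mᵀ.mulVec x) ⬝ᵥ (Mᵀ.mulVec x) := (dot_self_eq _).symm
        _ = x ⬝ᵥ (M.mulVec (Mᵀ.mulVec x)) := by
            conv_rhs => rw [Matrix.dotProduct_mulVec, ← Matrix.mulVec_transpose]
        _ ≤ euclNorm x * euclNorm (M.mulVec (Mᵀ.mulVec x)) := dot_le_norm _ _
        _ ≤ euclNorm x * (sigmaMax M * euclNorm (Mᵀ.mulVec x)) :=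
            mul_le_mul_of_nonneg_left (le_sigmaMax M _) (euclNorm_nonneg x)
    have hpos := euclNorm_pos h
    nlinarith [key, hpos]

private lemma ratio_bddBelow {p : ℕ} (M : Matrix (Fin p) (Fin p) ℝ) :
    BddBelow (Set.range fun x : {x : Fin p → ℝ // x ≠ 0} =>
      euclNorm (M.mulVec x.1) / euclNorm x.1) := by
  refine ⟨0, ?_⟩
  rintro r ⟨y, rfl⟩
  exact div_nonneg (euclNorm_nonneg _) (euclNorm_nonneg _)

private lemma sigmaMin_le_ratio {p : ℕ} (M : Matrix (Fin p) (Fin p) ℝ) {x : Fin p → ℝ}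
    (hx : x ≠ 0) : sigmaMin M ≤ euclNorm (M.mulVec x) / euclNorm x :=
  ciInf_le (ratio_bddBelow M) ⟨x, hx⟩

private lemma sigmaMin_pos {p : ℕ} [Nonempty {x : Fin p → ℝ // x ≠ 0}]
    {L : Matrix (Fin p) (Fin p) ℝ} (hL : IsUnit L.det) : 0 < sigmaMin L := by
  set c := Real.sqrt (∑ i, ∑ j, (L⁻¹) i j ^ 2) with hc_def
  have hinv : ∀ x : Fin p → ℝ, euclNorm x ≤ c * euclNorm (L.mulVec x) := by
    intro x
    have hx : (L⁻¹).mulVec (L.mulVec x) = x := by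
      rw [Matrix.mulVec_mulVec, Matrix.nonsing_inv_mul _ hL, Matrix.one_mulVec]
    calc euclNorm x = euclNorm ((L⁻¹).mulVec (L.mulVec x)) := by rw [hx]
      _ ≤ c * euclNorm (L.mulVec x) := mulVec_euclNorm_le _ _
  have hc : 0 < c := by
    obtain ⟨x⟩ := (inferInstance : Nonempty {x : Fin p → ℝ // x ≠ 0})
    have hcnn : 0 ≤ c := Real.sqrt_nonneg _
    rcases lt_or_eq_of_le hcnn with h | h
    · exact h
    · exfalso
      have h1 := hinv x.1
      rw [← h, zero_mul] at h1
      exact absurd h1 (not_le.mpr (euclNorm_pos x.2))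
  refine lt_of_lt_of_le (by positivity : (0:ℝ) < 1 / c) (le_ciInf ?_)
  intro x
  rw [div_le_div_iff₀ hc (euclNorm_pos x.2)]
  have := hinv x.1
  nlinarith [this]

private lemma sigmaMax_inv_le {p : ℕ} [Nonempty {x : Fin p → ℝ // x ≠ 0}]
    {L : Matrix (Fin p) (Fin p) ℝ} (hL : IsUnit L.det) :
    sigmaMax L⁻¹ ≤ 1 / sigmaMin L := by
  have hs := sigmaMin_pos hL
  apply ciSup_le
  intro x
  by_cases hu : (L⁻¹).mulVec x.1 = 0
  · rw [hu, euclNorm_zero, zero_div]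
    positivity
  · have hLu : L.mulVec ((L⁻¹).mulVec x.1) = x.1 := by
      rw [Matrix.mulVec_mulVec, Matrix.mul_nonsing_inv _ hL, Matrix.one_mulVec]
    have h1 : sigmaMin L ≤ euclNorm x.1 / euclNorm ((L⁻¹).mulVec x.1) := by
      have := sigmaMin_le_ratio L hu
      rwa [hLu] at this
    have h2 := (le_div_iff₀ (euclNorm_pos hu)).mp h1
    rw [div_le_div_iff₀ (euclNorm_pos x.2) hs]
    nlinarith [h2]

private lemma euclNorm_mulVec_orth {p : ℕ} {A : Matrix (Fin p) (Fin p) ℝ}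
    (hA : Aᵀ * A = 1) (x : Fin p → ℝ) : euclNorm (A.mulVec x) = euclNorm x := by
  have h : (A.mulVec x) ⬝ᵥ (A.mulVec x) = x ⬝ᵥ x := by
    rw [Matrix.dotProduct_mulVec, ← Matrix.vecMul_transpose, Matrix.vecMul_vecMul, hA,
      Matrix.vecMul_one]
  have h1 : euclNorm (A.mulVec x) ^ 2 = euclNorm x ^ 2 := by
    rw [← dot_self_eq, ← dot_self_eq, h]
  nlinarith [euclNorm_nonneg (A.mulVec x), euclNorm_nonneg x, h1]

private lemma perm_mul_transpose {p : ℕ} (e : Equiv.Perm (Fin p)) :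
    (e.permMatrix ℝ) * (e.permMatrix ℝ)ᵀ = 1 := by
  show (e.toPEquiv.toMatrix : Matrix (Fin p) (Fin p) ℝ) * e.toPEquiv.toMatrixᵀ = 1
  rw [← PEquiv.toMatrix_symm, ← Equiv.toPEquiv_symm, ← PEquiv.toMatrix_trans,
    ← Equiv.toPEquiv_trans]
  simp [Equiv.self_trans_symm, Equiv.toPEquiv_refl]

private lemma perm_transpose_mul {p : ℕ} (e : Equiv.Perm (Fin p)) :
    (e.permMatrix ℝ)ᵀ * (e.permMatrix ℝ) = 1 := by
  show (e.toPEquiv.toMatrixᵀ : Matrix (Fin p) (Fin p) ℝ) * e.toPEquiv.toMatrix = 1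
  rw [← PEquiv.toMatrix_symm, ← Equiv.toPEquiv_symm, ← PEquiv.toMatrix_trans,
    ← Equiv.toPEquiv_trans]
  simp [Equiv.symm_trans_self, Equiv.toPEquiv_refl]

private lemma euclNorm_single {p : ℕ} (j : Fin p) : euclNorm (Pi.single j 1 : Fin p → ℝ) = 1 := by
  rw [euclNorm]
  have h : ∀ i, ((Pi.single j 1 : Fin p → ℝ) i) ^ 2 = if i = j then 1 else 0 := by
    intro i
    rcases eq_or_ne i j with rfl | h
    · simp [Pi.single_apply]
    · simp [Pi.single_apply, h]
  simp only [h, Finset.sum_ite_eq', Finset.mem_univ, if_true, Real.sqrt_one]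

private lemma dot_conj {p : ℕ} (B D : Matrix (Fin p) (Fin p) ℝ) (x : Fin p → ℝ) :
    x ⬝ᵥ (Bᵀ * D * B).mulVec x = (B.mulVec x) ⬝ᵥ (D.mulVec (B.mulVec x)) := by
  rw [Matrix.mul_assoc, ← Matrix.mulVec_mulVec, Matrix.dotProduct_mulVec,
    Matrix.vecMul_transpose, ← Matrix.mulVec_mulVec]

private lemma single_dot_diag {p : ℕ} (d : Fin p → ℝ) (j : Fin p) :
    (Pi.single j 1 : Fin p → ℝ) ⬝ᵥ (Matrix.diagonal d).mulVec (Pi.single j 1) = d j := by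
  simp [dotProduct, Matrix.mulVec_diagonal, Pi.single_apply]

/-- Upper eigenvalue bound of Theorem 4 of the paper: with `H̄ = Pᵀ L Q Λ Qᵀ Lᵀ P`
whose spectral norm is at most `λ̄` (equivalently `|xᵀ H̄ x| ≤ λ̄ ‖x‖²` for all `x`),
and `H̄̄ = Pᵀ L Q Λ̄ Qᵀ Lᵀ P` the clipped version (`λ̄_j = max{τ, |λ_j|}`, `τ > 0`),
one has `λ_max(H̄̄) ≤ σ_max(L)² max{τ, λ̄/σ_min(L)²}`. -/
theorem stmt12 {p : ℕ} (P L Q : Matrix (Fin p) (Fin p) ℝ) (d : Fin p → ℝ)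
    (τ lamBar : ℝ) (hτ : 0 < τ) (hlamBar : 0 < lamBar)
    (hP : ∃ e : Equiv.Perm (Fin p), P = e.permMatrix ℝ)
    (hLdiag : ∀ i, L i i = 1) (hLtri : ∀ i j : Fin p, i < j → L i j = 0)
    (hQ : Q * Qᵀ = 1) (hQ' : Qᵀ * Q = 1)
    (hnorm : ∀ x : Fin p → ℝ,
      |x ⬝ᵥ (Pᵀ * L * Q * Matrix.diagonal d * Qᵀ * Lᵀ * P).mulVec x| ≤
        lamBar * euclNorm x ^ 2) :
    lambdaMax (Pᵀ * L * Q * (Matrix.diagonal fun j => max τ |d j|) * Qᵀ * Lᵀ * P) ≤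
      sigmaMax L ^ 2 * max τ (lamBar / sigmaMin L ^ 2) := by
  rcases isEmpty_or_nonempty {x : Fin p → ℝ // x ≠ 0} with hE | hNE
  · rw [lambdaMax, Real.iSup_of_isEmpty, sigmaMax, Real.iSup_of_isEmpty]
    simp
  -- setup
  obtain ⟨e, hPe⟩ := hP
  have hPPT : P * Pᵀ = 1 := by rw [hPe]; exact perm_mul_transpose e
  have hPTP : Pᵀ * P = 1 := by rw [hPe]; exact perm_transpose_mul e
  have hdet : L.det = 1 := by
    have htri : L.BlockTriangular OrderDual.toDual := fun i j h => hLtri i j h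
    rw [Matrix.det_of_lowerTriangular L htri]
    simp [hLdiag]
  have hLu : IsUnit L.det := by rw [hdet]; exact isUnit_one
  have hLTu : IsUnit (Lᵀ).det := by rw [Matrix.det_transpose, hdet]; exact isUnit_one
  have hs : 0 < sigmaMin L := sigmaMin_pos hLu
  set B : Matrix (Fin p) (Fin p) ℝ := Qᵀ * Lᵀ * P with hB
  have hBT : Bᵀ = Pᵀ * L * Q := by
    rw [hB]
    simp [Matrix.transpose_mul, Matrix.mul_assoc]
  have hform : ∀ D : Matrix (Fin p) (Fin p) ℝ,
      Pᵀ * L * Q * D * Qᵀ * Lᵀ * P = Bᵀ * D * B := by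
    intro D
    rw [hBT, hB]
    simp [Matrix.mul_assoc]
  -- bound on |d j|
  have hdj : ∀ j : Fin p, |d j| ≤ lamBar / sigmaMin L ^ 2 := by
    intro j
    set v : Fin p → ℝ := Q.mulVec (Pi.single j 1) with hv
    set xj : Fin p → ℝ := (Pᵀ * (Lᵀ)⁻¹ * Q).mulVec (Pi.single j 1) with hxj
    have hBxj : B.mulVec xj = Pi.single j 1 := by
      rw [hxj, Matrix.mulVec_mulVec]
      have hone : B * (Pᵀ * (Lᵀ)⁻¹ * Q) = 1 := by
        rw [hB]
        calc Qᵀ * Lᵀ * P * (Pᵀ * (Lᵀ)⁻¹ * Q)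
            = Qᵀ * (Lᵀ * ((P * Pᵀ) * ((Lᵀ)⁻¹ * Q))) := by
              simp only [Matrix.mul_assoc]
          _ = 1 := by
              rw [hPPT, Matrix.one_mul, ← Matrix.mul_assoc Lᵀ, Matrix.mul_nonsing_inv _ hLTu,
                Matrix.one_mul, hQ']
      rw [hone, Matrix.one_mulVec]
    have hdotj : xj ⬝ᵥ (Pᵀ * L * Q * Matrix.diagonal d * Qᵀ * Lᵀ * P).mulVec xj = d j := by
      rw [hform, dot_conj, hBxj, single_dot_diag]
    have hxjnorm : euclNorm xj ≤ 1 / sigmaMin L := by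
      have h1 : xj = Pᵀ.mulVec ((Lᵀ)⁻¹.mulVec v) := by
        rw [hxj, hv, Matrix.mulVec_mulVec, Matrix.mulVec_mulVec]
      have h2 : euclNorm xj = euclNorm ((Lᵀ)⁻¹.mulVec v) := by
        rw [h1]
        apply euclNorm_mulVec_orth
        rw [Matrix.transpose_transpose, hPPT]
      have h3 : euclNorm v = 1 := by
        rw [hv, euclNorm_mulVec_orth hQ', euclNorm_single]
      have h4 : euclNorm ((Lᵀ)⁻¹.mulVec v) ≤ sigmaMax L⁻¹ * euclNorm v := by
        rw [← Matrix.transpose_nonsing_inv]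
        exact transpose_mulVec_le _ _
      rw [h2]
      calc euclNorm ((Lᵀ)⁻¹.mulVec v) ≤ sigmaMax L⁻¹ * euclNorm v := h4
        _ = sigmaMax L⁻¹ := by rw [h3, mul_one]
        _ ≤ 1 / sigmaMin L := sigmaMax_inv_le hLu
    have hb := hnorm xj
    rw [hdotj] at hb
    have hxn : euclNorm xj ^ 2 ≤ (1 / sigmaMin L) ^ 2 :=
      pow_le_pow_left₀ (euclNorm_nonneg xj) hxjnorm 2
    calc |d j| ≤ lamBar * euclNorm xj ^ 2 := hb
      _ ≤ lamBar * (1 / sigmaMin L) ^ 2 :=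
          mul_le_mul_of_nonneg_left hxn (le_of_lt hlamBar)
      _ = lamBar / sigmaMin L ^ 2 := by
          field_simp
  -- main bound
  set Mx : ℝ := max τ (lamBar / sigmaMin L ^ 2) with hMx
  have hMxpos : 0 < Mx := lt_of_lt_of_le hτ (le_max_left _ _)
  rw [lambdaMax]
  apply ciSup_le
  intro x
  have hxpos := euclNorm_pos x.2
  rw [div_le_iff₀ (by positivity)]
  set y : Fin p → ℝ := B.mulVec x.1 with hy
  have hdoty : x.1 ⬝ᵥ (Pᵀ * L * Q * (Matrix.diagonal fun j => max τ |d j|) * Qᵀ * Lᵀ * P).mulVec x.1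
      = ∑ i, (max τ |d i|) * y i ^ 2 := by
    rw [hform, dot_conj]
    simp only [dotProduct, Matrix.mulVec_diagonal]
    apply Finset.sum_congr rfl
    intro i _
    ring
  have hsum : ∑ i, (max τ |d i|) * y i ^ 2 ≤ Mx * euclNorm y ^ 2 := by
    rw [euclNorm_sq, Finset.mul_sum]
    apply Finset.sum_le_sum
    intro i _
    apply mul_le_mul_of_nonneg_right _ (sq_nonneg _)
    exact max_le_max (le_refl τ) (hdj i) |>.trans (le_of_eq rfl)
  have hynorm : euclNorm y ≤ sigmaMax L * euclNorm x.1 := by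
    have h1 : y = Qᵀ.mulVec (Lᵀ.mulVec (P.mulVec x.1)) := by
      rw [hy, hB, Matrix.mulVec_mulVec, Matrix.mulVec_mulVec]
    rw [h1, euclNorm_mulVec_orth (by rw [Matrix.transpose_transpose, hQ])]
    calc euclNorm (Lᵀ.mulVec (P.mulVec x.1)) ≤ sigmaMax L * euclNorm (P.mulVec x.1) :=
        transpose_mulVec_le _ _
      _ = sigmaMax L * euclNorm x.1 := by rw [euclNorm_mulVec_orth hPTP]
  have hy2 : euclNorm y ^ 2 ≤ sigmaMax L ^ 2 * euclNorm x.1 ^ 2 := by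
    rw [← mul_pow]
    exact pow_le_pow_left₀ (euclNorm_nonneg y) hynorm 2
  calc x.1 ⬝ᵥ (Pᵀ * L * Q * (Matrix.diagonal fun j => max τ |d j|) * Qᵀ * Lᵀ * P).mulVec x.1
      = ∑ i, (max τ |d i|) * y i ^ 2 := hdoty
    _ ≤ Mx * euclNorm y ^ 2 := hsum
    _ ≤ Mx * (sigmaMax L ^ 2 * euclNorm x.1 ^ 2) :=
        mul_le_mul_of_nonneg_left hy2 (le_of_lt hMxpos)
    _ = sigmaMax L ^ 2 * Mx * euclNorm x.1 ^ 2 := by ring
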